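/- The 2n-th central-type Catalan identity holds: binom(2n,n) - binom(2n,n-1) = sum over p from 0 to floor(n/2) of (binom(n,p) - binom(n,p-1))^2. -/

import Mathlib

open Finset

/-- `d n p = binom(n,p) - binom(n,p-1)` with `binom(n,-1) = 0`. -/
def dInt (n p : ℕ) : ℤ :=
  (n.choose p : ℤ) - (if p = 0 then 0 else (n.choose (p - 1) : ℤ))

lemma vand_nat (n k : ℕ) :
    ((2 * n).choose k : ℕ) = ∑ i ∈ range (k + 1), n.choose i * n.choose (k - i) := by
  rw [two_mul, Nat.add_choose_eq, Finset.Nat.sum_antidiagonal_eq_sum_range_succ_mk]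

lemma sum_sq_choose (n : ℕ) :
    ∑ i ∈ range (n + 1), (n.choose i : ℤ) ^ 2 = ((2 * n).choose n : ℤ) := by
  have h := vand_nat n n
  have : ∑ i ∈ range (n + 1), n.choose i * n.choose (n - i)
      = ∑ i ∈ range (n + 1), n.choose i * n.choose i := by
    refine Finset.sum_congr rfl fun i hi => ?_
    simp only [mem_range] at hi
    rw [Nat.choose_symm (by omega : i ≤ n)]
  rw [this] at h
  push_cast [h]
  exact Finset.sum_congr rfl fun i _ => by ring

lemma sum_adj_choose (n : ℕ) (hn : 0 < n) :
    ∑ i ∈ range (n + 1), (n.choose (i + 1) : ℤ) * n.choose i = ((2 * n).choose (n - 1) : ℤ) := by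
  have h := vand_nat n (n - 1)
  have hrw : ∑ i ∈ range (n - 1 + 1), n.choose i * n.choose (n - 1 - i)
      = ∑ i ∈ range (n - 1 + 1), n.choose (i + 1) * n.choose i := by
    refine Finset.sum_congr rfl fun i hi => ?_
    simp only [mem_range] at hi
    have e : n.choose (n - 1 - i) = n.choose (i + 1) := by
      rw [← Nat.choose_symm (by omega : i + 1 ≤ n)]
      congr 1
      omega
    rw [e]; ring
  rw [hrw] at h
  have hsplit : ∑ i ∈ range (n + 1), (n.choose (i + 1) : ℤ) * n.choose i
      = ∑ i ∈ range (n - 1 + 1), (n.choose (i + 1) : ℤ) * n.choose i := by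
    rw [show n + 1 = (n - 1 + 1) + 1 by omega, Finset.sum_range_succ,
      show n - 1 + 1 = n by omega, Nat.choose_succ_self, Nat.cast_zero, zero_mul, add_zero]
  rw [hsplit]
  push_cast [h]
  rfl

lemma dInt_reflect (n p : ℕ) (hp : p ≤ n + 1) : dInt n (n + 1 - p) = - dInt n p := by
  unfold dInt
  rcases Nat.eq_zero_or_pos p with rfl | hp0
  · simp [Nat.choose_succ_self, Nat.choose_self]
  rcases eq_or_lt_of_le hp with rfl | hlt
  · simp [Nat.choose_succ_self, Nat.choose_self]
  · have h1 : n + 1 - p ≠ 0 := by omega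
    have h2 : p ≠ 0 := by omega
    rw [if_neg h1, if_neg h2]
    rw [show n + 1 - p - 1 = n - p by omega]
    have e1 : n.choose (n + 1 - p) = n.choose (p - 1) := by
      rw [← Nat.choose_symm (by omega : p - 1 ≤ n)]; congr 1; omega
    have e2 : n.choose (n - p) = n.choose p := Nat.choose_symm (by omega : p ≤ n)
    rw [e1, e2]; ring

/-- `binom(2n,n) - binom(2n,n-1) = ∑_{p=0}^{⌊n/2⌋} (binom(n,p) - binom(n,p-1))²`. -/
theorem stmt_2 (n : ℕ) (hn : 0 < n) :
    ((2 * n).choose n : ℤ) - ((2 * n).choose (n - 1) : ℤ) =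
      ∑ p ∈ Finset.range (n / 2 + 1), (dInt n p) ^ 2 := by
  set m := n / 2 with hm
  -- Total sum T over range (n+2)
  have hT : ∑ p ∈ range (n + 2), (dInt n p) ^ 2
      = 2 * ((2 * n).choose n : ℤ) - 2 * ((2 * n).choose (n - 1) : ℤ) := by
    have expand : ∀ p, (dInt n p) ^ 2 =
        (n.choose p : ℤ) ^ 2
          + (if p = 0 then 0 else (n.choose (p - 1) : ℤ)) ^ 2
          - 2 * ((n.choose p : ℤ) * (if p = 0 then 0 else (n.choose (p - 1) : ℤ))) := by
      intro p; unfold dInt; ring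
    simp only [expand]
    rw [Finset.sum_sub_distrib, Finset.sum_add_distrib]
    have hA : ∑ p ∈ range (n + 2), (n.choose p : ℤ) ^ 2 = ((2 * n).choose n : ℤ) := by
      rw [Finset.sum_range_succ, Nat.choose_succ_self, Nat.cast_zero]
      rw [zero_pow (by norm_num), add_zero, sum_sq_choose]
    have hB : ∑ p ∈ range (n + 2),
        (if p = 0 then (0:ℤ) else (n.choose (p - 1) : ℤ)) ^ 2 = ((2 * n).choose n : ℤ) := by
      rw [Finset.sum_range_succ', ← sum_sq_choose n]
      simp
    have hC : ∑ p ∈ range (n + 2),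
        (n.choose p : ℤ) * (if p = 0 then (0:ℤ) else (n.choose (p - 1) : ℤ))
        = ((2 * n).choose (n - 1) : ℤ) := by
      rw [Finset.sum_range_succ', ← sum_adj_choose n hn]
      simp
    have hC2 : ∑ p ∈ range (n + 2),
        2 * ((n.choose p : ℤ) * (if p = 0 then (0:ℤ) else (n.choose (p - 1) : ℤ)))
        = 2 * ((2 * n).choose (n - 1) : ℤ) := by
      rw [← Finset.mul_sum, hC]
    rw [hA, hB, hC2]
    ring
  -- Split T into two halves
  have hsplit : ∑ p ∈ range (n + 2), (dInt n p) ^ 2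
      = (∑ p ∈ range (m + 1), (dInt n p) ^ 2)
        + ∑ p ∈ Finset.Ico (m + 1) (n + 2), (dInt n p) ^ 2 := by
    rw [Finset.range_eq_Ico, ← Finset.sum_Ico_consecutive _ (by omega : 0 ≤ m + 1) (by omega : m + 1 ≤ n + 2), ← Finset.range_eq_Ico]
  -- Second half equals first half
  have hsecond : ∑ p ∈ Finset.Ico (m + 1) (n + 2), (dInt n p) ^ 2
      = ∑ p ∈ range (m + 1), (dInt n p) ^ 2 := by
    rw [Finset.sum_Ico_eq_sum_range]
    have hcard : n + 2 - (m + 1) = n + 1 - m := by omega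
    rw [hcard]
    have step1 : ∑ i ∈ range (n + 1 - m), (dInt n (m + 1 + i)) ^ 2
        = ∑ i ∈ range (n + 1 - m), (dInt n (n - m - i)) ^ 2 := by
      refine Finset.sum_congr rfl fun i hi => ?_
      simp only [mem_range] at hi
      have : m + 1 + i = n + 1 - (n - m - i) := by omega
      rw [this, dInt_reflect n _ (by omega)]
      ring
    rw [step1]
    have step2 : ∑ i ∈ range (n + 1 - m), (dInt n (n - m - i)) ^ 2
        = ∑ i ∈ range (n + 1 - m), (dInt n i) ^ 2 := by
      have := Finset.sum_range_reflect (fun j => (dInt n j) ^ 2) (n + 1 - m)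
      rw [← this]
      refine Finset.sum_congr rfl fun i hi => ?_
      simp only [mem_range] at hi
      congr 2
      omega
    rw [step2]
    rcases Nat.even_or_odd n with he | ho
    · obtain ⟨k, hk⟩ := he
      have : n + 1 - m = m + 1 := by omega
      rw [this]
    · obtain ⟨k, hk⟩ := ho
      have h1 : n + 1 - m = m + 2 := by omega
      have hmid : dInt n (m + 1) = 0 := by
        have := dInt_reflect n (m + 1) (by omega)
        rw [show n + 1 - (m + 1) = m + 1 by omega] at this
        linarith
      rw [h1, Finset.sum_range_succ, hmid]
      ring_nf
  rw [hsplit, hsecond] at hT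
  linarith
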